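/- If p∈A^0 is irreducible in A^0, then p∈A_+^0 or p∈A_−^0, and p has even length. -/

import Mathlib

/-- The involution on words: reverse and negate each entry. -/
def starWord (l : List ℤ) : List ℤ := (l.map (fun x => -x)).reverse

/-- A reduced word: a nonempty finite sequence of nonzero integers whose entries
alternate in sign and whose interior entries have absolute value at least 2. -/
def Reduced (l : List ℤ) : Prop :=
  l ≠ [] ∧
  (∀ i, i < l.length → l.getD i 0 ≠ 0) ∧
  (∀ i, i + 1 < l.length → (0 < l.getD i 0 ↔ l.getD (i + 1) 0 < 0)) ∧
  (∀ i, 0 < i → i + 1 < l.length → 2 ≤ |l.getD i 0|)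

/-- Auxiliary multiplication: the first argument is the *reversed* left word; the
junction is reduced (same-sign adjacent entries added, an interior entry `±1`
removed by summing its two neighbours with it). -/
def mulAux : List ℤ → List ℤ → List ℤ
  | [], R => R
  | x :: xs, [] => (x :: xs).reverse
  | x :: xs, y :: ys =>
    if 0 < x * y then
      xs.reverse ++ (x + y) :: ys
    else if x + y = 0 then
      if xs = [] ∧ ys = [] then [x, y]
      else if xs = [] then ys
      else if ys = [] then xs.reverse
      else mulAux xs ys
    else if (x = 1 ∨ x = -1) ∧ xs ≠ [] then
      mulAux xs ((x + y) :: ys)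
    else if (y = 1 ∨ y = -1) ∧ ys ≠ [] then
      mulAux ((x + y) :: xs) ys
    else
      xs.reverse ++ x :: y :: ys
termination_by L R => L.length + R.length
decreasing_by all_goals simp +arith +decide

/-- Multiplication in the `*`-semigroup `A`: concatenation followed by reduction. -/
def mulWords (v w : List ℤ) : List ℤ := mulAux v.reverse w

/-- `τ : A → ℤ`, the sum of the entries, is `List.sum`; `σ_r(n) = n_0 + ⋯ + n_r`
(equal to `τ(n)` when `r` exceeds the top index). -/
def sigmaW (l : List ℤ) (r : ℕ) : ℤ := (l.take (r + 1)).sum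

/-- `A⁰ = τ⁻¹(0)`, the `*`-subsemigroup of words with entry sum zero. -/
def A0 : Set (List ℤ) := {l | Reduced l ∧ l.sum = 0}

/-- `p` is irreducible in a subsemigroup `S` of `A`: whenever `p = m * n` with
`m, n ∈ S` then `p = m` or `p = n`. -/
def IrreducibleIn (S : Set (List ℤ)) (p : List ℤ) : Prop :=
  p ∈ S ∧ ∀ m ∈ S, ∀ n ∈ S, p = mulWords m n → p = m ∨ p = n

/-- `A₊`: reduced words `(n_0, …, n_k)` with `k ≥ 1`, `n_0 < 0` and `n_k > 0`. -/
def Aplus : Set (List ℤ) :=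
  {l | Reduced l ∧ 2 ≤ l.length ∧ l.getD 0 0 < 0 ∧ 0 < l.getD (l.length - 1) 0}

/-- `A₋`: reduced words `(n_0, …, n_k)` with `k ≥ 1`, `n_0 > 0` and `n_k < 0`. -/
def Aminus : Set (List ℤ) :=
  {l | Reduced l ∧ 2 ≤ l.length ∧ 0 < l.getD 0 0 ∧ l.getD (l.length - 1) 0 < 0}

/- ### Auxiliary lemmas -/

lemma getD_take_aux (l : List ℤ) (i j : ℕ) (hij : i < j) (h : i < l.length) :
    (l.take j).getD i 0 = l.getD i 0 := by
  rw [List.getD_eq_getElem _ _ (by simp; omega), List.getD_eq_getElem _ _ h]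
  simp [List.getElem_take]

lemma getD_drop_aux (l : List ℤ) (i j : ℕ) (h : j + i < l.length) :
    (l.drop j).getD i 0 = l.getD (j + i) 0 := by
  rw [List.getD_eq_getElem _ _ (by simp; omega), List.getD_eq_getElem _ _ h]
  simp [List.getElem_drop]

lemma sigmaW_zero (l : List ℤ) (h : 0 < l.length) : sigmaW l 0 = l.getD 0 0 := by
  rw [sigmaW, List.sum_take_succ l 0 h, List.getD_eq_getElem _ _ h]
  simp

lemma sigmaW_succ (l : List ℤ) (r : ℕ) (h : r + 1 < l.length) :
    sigmaW l (r + 1) = sigmaW l r + l.getD (r + 1) 0 := by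
  rw [sigmaW, sigmaW, List.sum_take_succ l (r + 1) h, List.getD_eq_getElem _ _ h]

lemma sigmaW_last (l : List ℤ) (h : 0 < l.length) : sigmaW l (l.length - 1) = l.sum := by
  rw [sigmaW, show l.length - 1 + 1 = l.length by omega, List.take_length]

/-- Sign alternation: entry `i` is positive iff (`i` even ↔ entry `0` positive). -/
lemma signFormula (l : List ℤ) (hl : Reduced l) :
    ∀ i, i < l.length → (0 < l.getD i 0 ↔ (Even i ↔ 0 < l.getD 0 0)) := by
  intro i
  induction i with
  | zero => intro _; simp
  | succ n ih =>
    intro h1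
    have hn : n < l.length := by omega
    have halt := hl.2.2.1 n h1
    have hne := hl.2.1 (n + 1) h1
    have hne0 := hl.2.1 n hn
    have hprev := ih hn
    have key : (0 < l.getD (n + 1) 0) ↔ ¬ 0 < l.getD n 0 := by omega
    rw [Nat.even_add_one, key, hprev]
    tauto

/-- A "good" position: partial sum nonzero and of the same sign as the entry. -/
def GoodW (l : List ℤ) (r : ℕ) : Prop :=
  (0 < sigmaW l r ∧ 0 < l.getD r 0) ∨ (sigmaW l r < 0 ∧ l.getD r 0 < 0)

/-- If the two ends of a sum-zero reduced word have the same sign, there is a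
consecutive pair of good interior positions. -/
lemma exists_pair (l : List ℤ) (hl : Reduced l) (hsum : l.sum = 0) (hK : 2 ≤ l.length)
    (hsame : (0 < l.getD 0 0 ↔ 0 < l.getD (l.length - 1) 0)) :
    ∃ j, j + 3 ≤ l.length ∧ GoodW l j ∧ GoodW l (j + 1) := by
  by_contra hno
  push_neg at hno
  have key : ∀ r, r + 1 < l.length → (GoodW l r ↔ Even r) := by
    intro r
    induction r with
    | zero =>
      intro h
      have h0 : 0 < l.length := by omega
      have hne := hl.2.1 0 h0
      unfold GoodW
      rw [sigmaW_zero l h0]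
      constructor
      · intro _; exact Even.zero
      · intro _; omega
    | succ n ih =>
      intro h
      have ihn := ih (by omega)
      rw [Nat.even_add_one, ← ihn]
      have hs := sigmaW_succ l n (by omega)
      have halt := hl.2.2.1 n (by omega)
      have hne := hl.2.1 (n + 1) (by omega)
      have hne0 := hl.2.1 n (by omega)
      constructor
      · intro hg hgn
        exact hno n (by omega) hgn hg
      · intro hbad
        unfold GoodW at hbad ⊢
        omega
  have hL : l.length - 1 < l.length := by omega
  have hEvenL : Even (l.length - 1) := by
    have hs := signFormula l hl (l.length - 1) hL
    have hne := hl.2.1 (l.length - 1) hL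
    have hne0 := hl.2.1 0 (by omega)
    by_cases h0 : 0 < l.getD 0 0
    · exact (hs.mp (hsame.mp h0)).mpr h0
    · have hLneg : ¬ 0 < l.getD (l.length - 1) 0 := fun hc => h0 (hsame.mpr hc)
      have h2 : ¬ (Even (l.length - 1) ↔ 0 < l.getD 0 0) := fun hc => hLneg (hs.mpr hc)
      tauto
  have hG : GoodW l (l.length - 2) := by
    have h1 : l.length - 2 + 1 < l.length := by omega
    have hs := sigmaW_succ l (l.length - 2) h1
    have hlast : sigmaW l (l.length - 2 + 1) = 0 := by
      rw [show l.length - 2 + 1 = l.length - 1 by omega, sigmaW_last l (by omega), hsum]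
    have halt := hl.2.2.1 (l.length - 2) (by omega)
    have hne := hl.2.1 (l.length - 2 + 1) (by omega)
    have hne0 := hl.2.1 (l.length - 2) (by omega)
    unfold GoodW
    omega
  have hEv := (key (l.length - 2) (by omega)).mp hG
  have : l.length - 1 = (l.length - 2) + 1 := by omega
  rw [this, Nat.even_add_one] at hEvenL
  exact hEvenL hEv

/-- The factorization at a good pair. -/
lemma factor (l : List ℤ) (hl : Reduced l) (hsum : l.sum = 0) (j : ℕ) (hj : j + 3 ≤ l.length)
    (hg : GoodW l j) (hg1 : GoodW l (j + 1)) :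
    ∃ m n, (Reduced m ∧ m.sum = 0) ∧ (Reduced n ∧ n.sum = 0) ∧ l = mulWords m n ∧
      m.length < l.length ∧ n.length < l.length := by
  set K := l.length with hKdef
  set c : ℤ := -(sigmaW l j) with hc
  set b : ℤ := sigmaW l (j + 1) with hb
  have htl : (l.take (j + 1)).length = j + 1 := by simp; omega
  have hs1 : sigmaW l (j + 1) = sigmaW l j + l.getD (j + 1) 0 := sigmaW_succ l j (by omega)
  have halt0 := hl.2.2.1 j (by omega)
  have halt1 := hl.2.2.1 (j + 1) (by omega)
  have hnej := hl.2.1 j (by omega)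
  have hnej1 := hl.2.1 (j + 1) (by omega)
  have hnej2 := hl.2.1 (j + 2) (by omega)
  refine ⟨l.take (j + 1) ++ [c], b :: l.drop (j + 2), ⟨?_, ?_⟩, ⟨?_, ?_⟩, ?_, ?_, ?_⟩
  · -- Reduced m
    have hmlen : (l.take (j + 1) ++ [c]).length = j + 2 := by simp [htl]
    have hmd : ∀ i, i ≤ j → (l.take (j + 1) ++ [c]).getD i 0 = l.getD i 0 := by
      intro i hi
      rw [List.getD_append _ _ _ _ (by omega), getD_take_aux l i (j + 1) (by omega) (by omega)]
    have hmc : (l.take (j + 1) ++ [c]).getD (j + 1) 0 = c := by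
      rw [List.getD_append_right _ _ _ _ (by omega), htl]
      simp
    refine ⟨by simp, ?_, ?_, ?_⟩
    · intro i hi
      rw [hmlen] at hi
      rcases Nat.lt_or_ge i (j + 1) with h | h
      · rw [hmd i (by omega)]
        exact hl.2.1 i (by omega)
      · have : i = j + 1 := by omega
        rw [this, hmc]
        unfold GoodW at hg
        omega
    · intro i hi
      rw [hmlen] at hi
      rcases Nat.lt_or_ge (i + 1) (j + 1) with h | h
      · rw [hmd i (by omega), hmd (i + 1) (by omega)]
        exact hl.2.2.1 i (by omega)
      · have hij : i = j := by omega
        subst hij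
        rw [hmd i (le_refl _), hmc]
        unfold GoodW at hg
        omega
    · intro i h0 hi
      rw [hmlen] at hi
      rw [hmd i (by omega)]
      exact hl.2.2.2 i h0 (by omega)
  · -- sum m = 0
    rw [List.sum_append]
    simp [hc, sigmaW]
  · -- Reduced n
    have hnlen : (b :: l.drop (j + 2)).length = K - j - 1 := by simp; omega
    have hnd : ∀ i, j + 2 + i < K → (b :: l.drop (j + 2)).getD (i + 1) 0 = l.getD (j + 2 + i) 0 := by
      intro i hi
      rw [List.getD_cons_succ, getD_drop_aux l i (j + 2) (by omega)]
    refine ⟨by simp, ?_, ?_, ?_⟩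
    · intro i hi
      rw [hnlen] at hi
      cases i with
      | zero =>
        rw [List.getD_cons_zero]
        unfold GoodW at hg1
        omega
      | succ i' =>
        rw [hnd i' (by omega)]
        exact hl.2.1 _ (by omega)
    · intro i hi
      rw [hnlen] at hi
      cases i with
      | zero =>
        rw [List.getD_cons_zero, hnd 0 (by omega)]
        unfold GoodW at hg1
        have : j + 2 + 0 = j + 1 + 1 := by omega
        rw [this]
        omega
      | succ i' =>
        rw [hnd i' (by omega), hnd (i' + 1) (by omega),
          show j + 2 + (i' + 1) = (j + 2 + i') + 1 by omega]
        exact hl.2.2.1 _ (by omega)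
    · intro i h0 hi
      rw [hnlen] at hi
      cases i with
      | zero => omega
      | succ i' =>
        rw [hnd i' (by omega)]
        exact hl.2.2.2 _ (by omega) (by omega)
  · -- sum n = 0
    have := List.sum_take_add_sum_drop l (j + 2)
    rw [List.sum_cons]
    have hb2 : b = (l.take (j + 2)).sum := by rw [hb, sigmaW]
    omega
  · -- l = mulWords m n
    rw [mulWords, List.reverse_append]
    simp only [List.reverse_cons, List.reverse_nil, List.nil_append, List.singleton_append]
    have hcb : 0 < c * b := by
      unfold GoodW at hg hg1
      rcases hg with ⟨h1, h2⟩ | ⟨h1, h2⟩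
      · rcases hg1 with ⟨h3, h4⟩ | ⟨h3, h4⟩
        · omega
        · exact mul_pos_of_neg_of_neg (by omega) h3
      · rcases hg1 with ⟨h3, h4⟩ | ⟨h3, h4⟩
        · exact mul_pos (by omega) h3
        · omega
    rw [mulAux, if_pos hcb, List.reverse_reverse]
    have hj1 : j + 1 < K := by omega
    have hget : l.getD (j + 1) 0 = l[j + 1] := List.getD_eq_getElem l 0 hj1
    conv_lhs => rw [← List.take_append_drop (j + 1) l, List.drop_eq_getElem_cons hj1]
    have : c + b = l[j + 1] := by rw [← hget]; omega
    rw [this]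
  · -- m.length < l.length
    simp [htl]; omega
  · -- n.length < l.length
    simp; omega

/-- If `p ∈ A⁰` is irreducible in `A⁰`, then `p ∈ A₊⁰` or `p ∈ A₋⁰`, and `p` has
even length. -/
theorem irreducible_mem_Aplus0_or_Aminus0 (p : List ℤ) (hp : IrreducibleIn A0 p) :
    (p ∈ A0 ∩ Aplus ∨ p ∈ A0 ∩ Aminus) ∧ Even p.length := by
  obtain ⟨⟨hred, hsum⟩, hirr⟩ := hp
  have hK0 : 0 < p.length := List.length_pos_iff.mpr hred.1
  have hK2 : 2 ≤ p.length := by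
    by_contra h
    have h1 : p.length = 1 := by omega
    obtain ⟨x, rfl⟩ := List.length_eq_one_iff.mp h1
    have := hred.2.1 0 (by simp)
    simp at this hsum
    exact this hsum
  have hne0 := hred.2.1 0 hK0
  have hneL := hred.2.1 (p.length - 1) (by omega)
  by_cases hsame : (0 < p.getD 0 0 ↔ 0 < p.getD (p.length - 1) 0)
  · exfalso
    obtain ⟨j, hj, hg, hg1⟩ := exists_pair p hred hsum hK2 hsame
    obtain ⟨m, n, hm, hn, hprod, hlm, hln⟩ := factor p hred hsum j hj hg hg1
    rcases hirr m hm n hn hprod with h | h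
    · rw [h] at hlm; exact lt_irrefl _ hlm
    · rw [h] at hln; exact lt_irrefl _ hln
  · constructor
    · by_cases h0 : 0 < p.getD 0 0
      · right
        exact ⟨⟨hred, hsum⟩, hred, hK2, h0, by omega⟩
      · left
        exact ⟨⟨hred, hsum⟩, hred, hK2, by omega, by omega⟩
    · have hs := signFormula p hred (p.length - 1) (by omega)
      have hnotE : ¬ Even (p.length - 1) := by
        intro hE
        by_cases h0 : 0 < p.getD 0 0
        · have : ¬ 0 < p.getD (p.length - 1) 0 := by tauto
          have := hs.not.mp this
          tauto
        · have hL : 0 < p.getD (p.length - 1) 0 := by omega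
          have := hs.mp hL
          tauto
      rw [show p.length = (p.length - 1) + 1 by omega, Nat.even_add_one]
      exact hnotE
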